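/- Let M ≥ 2 be an integer, η ∈ ℝ, and ϑ ∈ (−π/2, π/2). Consider the elevation cut θ ↦ f(η, θ; η, ϑ) of the sUPA array factor. Then f(η, ϑ + arcsin(2/M); η, ϑ) = 0 and f(η, ϑ − arcsin(2/M); η, ϑ) = 0, while f(η, θ; η, ϑ) ≠ 0 for every θ with |θ − ϑ| < arcsin(2/M). Consequently the null-to-null elevation beamwidth of the main lobe equals 2·arcsin(2/M), independently of η and ϑ. -/
import Mathlib


open Real Complex Finset

/-- The Dirichlet kernel `H_M(x) = (1/M) ∑_{m=0}^{M-1} exp(iπ m x)`. -/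
noncomputable def dirichletKernel (M : ℕ) (x : ℝ) : ℂ :=
  (1 / (M : ℂ)) * ∑ m ∈ Finset.range M, Complex.exp (Complex.I * (Real.pi : ℂ) * (m : ℂ) * (x : ℂ))

/-- The sUPA array factor
`f(φ,θ;η,ϑ) = M² H_M(cos θ sin(φ−η)) H_M(sin θ cos ϑ − cos θ sin ϑ cos(φ−η))`. -/
noncomputable def sUPAFactor (M : ℕ) (φ θ η ϑ : ℝ) : ℂ :=
  (M : ℂ) ^ 2 * dirichletKernel M (Real.cos θ * Real.sin (φ - η)) *
    dirichletKernel M (Real.sin θ * Real.cos ϑ - Real.cos θ * Real.sin ϑ * Real.cos (φ - η))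

lemma dk_geom (M : ℕ) (x : ℝ) :
    dirichletKernel M x
      = (1 / (M : ℂ)) * ∑ m ∈ Finset.range M, (Complex.exp (Complex.I * Real.pi * x)) ^ m := by
  unfold dirichletKernel
  congr 1
  refine Finset.sum_congr rfl fun m _ => ?_
  rw [← Complex.exp_nat_mul]
  congr 1
  ring

lemma dk_zero (M : ℕ) (hM : 2 ≤ M) (x : ℝ) (hxM : x * M = 2 ∨ x * M = -2) :
    dirichletKernel M x = 0 := by
  have hM0 : (M : ℂ) ≠ 0 := Nat.cast_ne_zero.mpr (by omega)
  set z := Complex.exp (Complex.I * Real.pi * x) with hz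
  have hz1 : z ≠ 1 := by
    intro h
    rw [hz, Complex.exp_eq_one_iff] at h
    obtain ⟨n, hn⟩ := h
    have hπ : (Real.pi : ℂ) ≠ 0 := Complex.ofReal_ne_zero.mpr Real.pi_ne_zero
    have hx2n : (x : ℂ) = 2 * n := by
      have h2 : (Complex.I * Real.pi) * (x : ℂ) = (Complex.I * Real.pi) * (2 * n) := by
        linear_combination hn
      exact mul_left_cancel₀ (mul_ne_zero Complex.I_ne_zero hπ) h2
    have hx2n' : x = 2 * n := by exact_mod_cast hx2n
    have hMZ : (2:ℤ) ≤ (M:ℤ) := by exact_mod_cast hM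
    have hdvd : (M:ℤ) ∣ 1 := by
      rcases hxM with h | h
      · rw [hx2n'] at h
        have h' : ((n * M : ℤ) : ℝ) = 1 := by push_cast; linarith
        have h'' : (n * M : ℤ) = 1 := by exact_mod_cast h'
        exact ⟨n, by linear_combination -h''⟩
      · rw [hx2n'] at h
        have h' : ((n * M : ℤ) : ℝ) = -1 := by push_cast; linarith
        have h'' : (n * M : ℤ) = -1 := by exact_mod_cast h'
        exact ⟨-n, by linear_combination h''⟩
    have := Int.le_of_dvd one_pos hdvd
    omega
  have hzM : z ^ M = 1 := by
    rw [hz, ← Complex.exp_nat_mul, Complex.exp_eq_one_iff]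
    rcases hxM with h | h
    · refine ⟨1, ?_⟩
      have hc : (x : ℂ) * M = 2 := by exact_mod_cast h
      push_cast
      linear_combination (Complex.I * Real.pi) * hc
    · refine ⟨-1, ?_⟩
      have hc : (x : ℂ) * M = -2 := by exact_mod_cast h
      push_cast
      linear_combination (Complex.I * Real.pi) * hc
  rw [dk_geom, geom_sum_eq hz1, hzM, sub_self, zero_div, mul_zero]

lemma dk_ne_zero (M : ℕ) (hM : 2 ≤ M) (x : ℝ) (hx : |x| < 2 / M) :
    dirichletKernel M x ≠ 0 := by
  have hM0 : (M : ℂ) ≠ 0 := Nat.cast_ne_zero.mpr (by omega)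
  have hMR : (0:ℝ) < M := by positivity
  rw [dk_geom]
  refine mul_ne_zero (by simp [hM0]) ?_
  set z := Complex.exp (Complex.I * Real.pi * x) with hz
  by_cases hz1 : z = 1
  · simp [hz1, hM0]
  · rw [geom_sum_eq hz1]
    refine div_ne_zero ?_ (sub_ne_zero.mpr hz1)
    rw [sub_ne_zero]
    intro hzM
    rw [hz, ← Complex.exp_nat_mul, Complex.exp_eq_one_iff] at hzM
    obtain ⟨n, hn⟩ := hzM
    have hπ : (Real.pi : ℂ) ≠ 0 := Complex.ofReal_ne_zero.mpr Real.pi_ne_zero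
    have hxn : (x : ℂ) * M = 2 * n := by
      have h2 : (Complex.I * Real.pi) * ((x : ℂ) * M) = (Complex.I * Real.pi) * (2 * n) := by
        linear_combination hn
      exact mul_left_cancel₀ (mul_ne_zero Complex.I_ne_zero hπ) h2
    have hxn' : x * M = 2 * n := by exact_mod_cast hxn
    rcases eq_or_ne n 0 with h0 | h0
    · have hx0 : x = 0 := by
        rw [h0] at hxn'; norm_num at hxn'
        rcases hxn' with h | h
        · exact h
        · omega
      apply hz1
      rw [hz, hx0]
      simp
    · have h1 : (1:ℝ) ≤ |(n:ℝ)| := by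
        have : (1:ℤ) ≤ |n| := Int.one_le_abs h0
        exact_mod_cast this
      have : |x| * M = 2 * |(n:ℝ)| := by
        have h3 : |x * (M:ℝ)| = |2 * (n:ℝ)| := by rw [hxn']
        rwa [abs_mul, abs_mul, Nat.abs_cast, _root_.abs_two] at h3
      have h2M : 2 / (M:ℝ) ≤ |x| := by
        rw [div_le_iff₀ hMR]
        nlinarith
      linarith

lemma dk_at_zero (M : ℕ) (hM : 2 ≤ M) : dirichletKernel M 0 = 1 := by
  have hM0 : (M : ℂ) ≠ 0 := Nat.cast_ne_zero.mpr (by omega)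
  simp only [dirichletKernel, Complex.ofReal_zero, mul_zero, Complex.exp_zero,
    Finset.sum_const, Finset.card_range, nsmul_eq_mul, mul_one]
  field_simp

lemma factor_eq (M : ℕ) (η ϑ θ : ℝ) :
    sUPAFactor M η θ η ϑ
      = (M : ℂ) ^ 2 * dirichletKernel M 0 * dirichletKernel M (Real.sin (θ - ϑ)) := by
  unfold sUPAFactor
  rw [sub_self, Real.sin_zero, Real.cos_zero, mul_zero, mul_one, ← Real.sin_sub]

/-- Elevation cut of the sUPA array factor: the first nulls around the peak `θ = ϑ` lie
exactly at `θ = ϑ ± arcsin(2/M)`, and there is no null strictly inside; hence the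
null-to-null elevation beamwidth equals `2 arcsin(2/M)`, independently of `η` and `ϑ`. -/
theorem sUPA_elevation_beamwidth (M : ℕ) (hM : 2 ≤ M) (η : ℝ) (ϑ : ℝ)
    (hϑ : ϑ ∈ Set.Ioo (-(Real.pi / 2)) (Real.pi / 2)) :
    sUPAFactor M η (ϑ + Real.arcsin (2 / M)) η ϑ = 0 ∧
    sUPAFactor M η (ϑ - Real.arcsin (2 / M)) η ϑ = 0 ∧
    ∀ θ : ℝ, |θ - ϑ| < Real.arcsin (2 / M) → sUPAFactor M η θ η ϑ ≠ 0 := by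
  have hMR : (0:ℝ) < M := by positivity
  have h2M1 : (2:ℝ) / M ≤ 1 := by
    rw [div_le_one hMR]; exact_mod_cast hM
  have h2M0 : (0:ℝ) ≤ 2 / M := by positivity
  have hsin : Real.sin (Real.arcsin (2 / M)) = 2 / M :=
    Real.sin_arcsin (by linarith) h2M1
  have hxM : (2 / (M:ℝ)) * M = 2 := by field_simp
  refine ⟨?_, ?_, ?_⟩
  · rw [factor_eq, add_sub_cancel_left, hsin, dk_zero M hM _ (Or.inl hxM), mul_zero]
  · rw [factor_eq]
    have : ϑ - Real.arcsin (2 / M) - ϑ = -(Real.arcsin (2 / M)) := by ring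
    rw [this, Real.sin_neg, hsin, dk_zero M hM (-(2/(M:ℝ))) (Or.inr (by rw [neg_mul, hxM])), mul_zero]
  · intro θ hθ
    rw [factor_eq]
    have ha2 : Real.arcsin (2 / M) ≤ Real.pi / 2 := Real.arcsin_le_pi_div_two _
    have ha0 : 0 ≤ Real.arcsin (2 / M) := Real.arcsin_nonneg.mpr h2M0
    obtain ⟨hl, hr⟩ := abs_lt.mp hθ
    have hmem : θ - ϑ ∈ Set.Icc (-(Real.pi/2)) (Real.pi/2) :=
      ⟨by linarith, by linarith⟩
    have hmem' : -(θ - ϑ) ∈ Set.Icc (-(Real.pi/2)) (Real.pi/2) :=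
      ⟨by linarith, by linarith⟩
    have hmema : Real.arcsin (2 / M) ∈ Set.Icc (-(Real.pi/2)) (Real.pi/2) :=
      ⟨by linarith, ha2⟩
    have hs1 : Real.sin (θ - ϑ) < 2 / M := by
      rw [← hsin]; exact Real.strictMonoOn_sin hmem hmema hr
    have hs2 : -(2 / (M:ℝ)) < Real.sin (θ - ϑ) := by
      have : Real.sin (-(θ - ϑ)) < 2 / M := by
        rw [← hsin]; exact Real.strictMonoOn_sin hmem' hmema (by linarith)
      rw [Real.sin_neg] at this; linarith
    have habs : |Real.sin (θ - ϑ)| < 2 / M := abs_lt.mpr ⟨hs2, hs1⟩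
    refine mul_ne_zero (mul_ne_zero ?_ ?_) (dk_ne_zero M hM _ habs)
    · exact pow_ne_zero _ (Nat.cast_ne_zero.mpr (by omega))
    · rw [dk_at_zero M hM]; exact one_ne_zero
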